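/- Let S = {0,1}^ℝ be equipped with the product σ-algebra generated by the coordinate projections (equivalently, the σ-algebra consisting of all sets of the form π_A^{-1}(B) for countable A ⊆ ℝ and Borel B ⊆ {0,1}^A). Then the map μ ↦ |μ|(S), from the space M±(S) of finite signed measures on S (with the σ-algebra generated by the evaluation maps μ ↦ μ(B)) to [0,∞), is not measurable; moreover, the set M(S) of nonnegative finite measures is not a measurable subset of M±(S). -/

import Mathlib

open MeasureTheory

/-- The σ-algebra on the space `M±(S)` of finite signed measures on `S`,
generated by the evaluation maps `μ ↦ μ B` over measurable sets `B`. -/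
instance signedMeasureMeasurableSpace (S : Type*) [MeasurableSpace S] :
    MeasurableSpace (SignedMeasure S) :=
  ⨆ (B : Set S) (_ : MeasurableSet B),
    MeasurableSpace.comap (fun μ : SignedMeasure S => μ B) inferInstance

section Aux

variable {α ι γ : Type*}

/-- A set measurable for a supremum of σ-algebras is measurable for the supremum over a
countable subfamily. -/
theorem exists_seq_measurableSet_iSup (m : ι → MeasurableSpace α) [Nonempty ι] {s : Set α}
    (hs : MeasurableSet[⨆ i, m i] s) :
    ∃ g : ℕ → ι, MeasurableSet[⨆ n, m (g n)] s := by
  rw [MeasurableSpace.measurableSet_iSup] at hs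
  induction hs with
  | basic u hu =>
      obtain ⟨i, hi⟩ := hu
      exact ⟨fun _ : ℕ => i, (le_iSup (fun _ : ℕ => m i) 0) _ hi⟩
  | empty => exact ⟨fun _ : ℕ => Classical.arbitrary ι, @MeasurableSet.empty α (⨆ n : ℕ, m (Classical.arbitrary ι))⟩
  | compl u _ ih =>
      obtain ⟨g, hg⟩ := ih
      exact ⟨g, hg.compl⟩
  | iUnion t _ ih =>
      choose g hg using ih
      refine ⟨fun n : ℕ => g n.unpair.1 n.unpair.2, MeasurableSet.iUnion fun k => ?_⟩
      have hle : (⨆ n, m (g k n)) ≤ ⨆ n : ℕ, m (g n.unpair.1 n.unpair.2) := by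
        refine iSup_le fun n => ?_
        have h1 : m (g k n) = m (g (Nat.pair k n).unpair.1 (Nat.pair k n).unpair.2) := by
          rw [Nat.unpair_pair]
        rw [h1]
        exact le_iSup (fun p : ℕ => m (g p.unpair.1 p.unpair.2)) (Nat.pair k n)
      exact hle _ (hg k)

/-- If `s` is measurable for the σ-algebra generated by countably many maps `f n`, and
`x`, `y` have the same values under all the `f n`, then `x ∈ s ↔ y ∈ s`. -/
theorem mem_iff_of_eval_eq [mγ : MeasurableSpace γ] (f : ℕ → α → γ) {s : Set α}
    (hs : MeasurableSet[⨆ n, mγ.comap (f n)] s) {x y : α}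
    (h : ∀ n, f n x = f n y) : x ∈ s ↔ y ∈ s := by
  have hpi : (⨆ n, mγ.comap (f n))
      = MeasurableSpace.pi.comap (fun a (n : ℕ) => f n a) := by
    rw [MeasurableSpace.pi, MeasurableSpace.comap_iSup]
    refine le_antisymm (iSup_le fun n => ?_) (iSup_le fun n => ?_) <;>
      · refine le_trans ?_ (le_iSup _ n)
        rw [MeasurableSpace.comap_comp]
        exact le_of_eq rfl
  rw [hpi] at hs
  obtain ⟨s', -, rfl⟩ := hs
  have hxy : (fun n => f n x) = fun n => f n y := funext h
  simp only [Set.mem_preimage, hxy]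

end Aux

section Key

local notation "S" => (ℝ → Bool)

/-- Key lemma: every measurable set `T` of signed measures contains `0` iff it contains a
certain signed measure taking the value `-1` on some measurable set. -/
theorem key_lemma (T : Set (SignedMeasure S)) (hT : MeasurableSet T) :
    ∃ μ : SignedMeasure S, (∃ B : Set S, MeasurableSet B ∧ μ B = -1) ∧ (μ ∈ T ↔ 0 ∈ T) := by
  -- reduce to countably many evaluation sets
  have hT' : MeasurableSet[⨆ p : { B : Set S // MeasurableSet B },
      MeasurableSpace.comap (fun μ : SignedMeasure S => μ p.1) inferInstance] T := by
    have : (signedMeasureMeasurableSpace S)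
        = ⨆ p : { B : Set S // MeasurableSet B },
            MeasurableSpace.comap (fun μ : SignedMeasure S => μ p.1) inferInstance :=
      iSup_subtype'
    rwa [← this]
  haveI : Nonempty { B : Set S // MeasurableSet B } := ⟨⟨∅, MeasurableSet.empty⟩⟩
  obtain ⟨g, hg⟩ := exists_seq_measurableSet_iSup _ hT'
  -- each evaluation set depends on countably many coordinates
  have hcoord : ∀ n : ℕ, ∃ h : ℕ → ℝ,
      MeasurableSet[⨆ k, MeasurableSpace.comap (fun x : S => x (h k)) inferInstance]
        (g n).1 := by
    intro n
    have : MeasurableSet[⨆ r : ℝ, MeasurableSpace.comap (fun x : S => x r) inferInstance]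
        (g n).1 := (g n).2
    exact exists_seq_measurableSet_iSup _ this
  choose h hh using hcoord
  -- pick a coordinate not used by any of them
  have hA : (Set.range fun p : ℕ × ℕ => h p.1 p.2).Countable := Set.countable_range _
  obtain ⟨r, hr⟩ : ∃ r : ℝ, r ∉ Set.range fun p : ℕ × ℕ => h p.1 p.2 := by
    by_contra hcon
    push_neg at hcon
    have : (Set.univ : Set ℝ).Countable := by
      have : (Set.range fun p : ℕ × ℕ => h p.1 p.2) = Set.univ :=
        Set.eq_univ_of_forall hcon
      rwa [this] at hA
    exact Cardinal.not_countable_real (by simpa using this)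
  -- the two points and the signed measure
  set x0 : S := fun _ => false with hx0
  set x1 : S := Function.update x0 r true with hx1
  set μr : SignedMeasure S :=
    (Measure.dirac x1).toSignedMeasure - (Measure.dirac x0).toSignedMeasure with hμr
  -- membership in each evaluation set is the same for `x0` and `x1`
  have hmem : ∀ n : ℕ, x0 ∈ (g n).1 ↔ x1 ∈ (g n).1 := by
    intro n
    refine mem_iff_of_eval_eq (fun k (x : S) => x (h n k)) (hh n) fun k => ?_
    have hne : h n k ≠ r := fun he => hr ⟨(n, k), he⟩
    simp [hx1, Function.update_of_ne hne]
  -- value of `μr` on measurable sets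
  have hval : ∀ B : Set S, MeasurableSet B →
      μr B = ((Measure.dirac x1) B).toReal - ((Measure.dirac x0) B).toReal := by
    intro B hB
    rw [hμr, VectorMeasure.sub_apply, Measure.toSignedMeasure_apply_measurable hB,
      Measure.toSignedMeasure_apply_measurable hB]
    rfl
  have hzero : ∀ n : ℕ, μr (g n).1 = 0 := by
    intro n
    rw [hval _ (g n).2]
    by_cases hx : x0 ∈ (g n).1
    · rw [Measure.dirac_apply_of_mem ((hmem n).mp hx), Measure.dirac_apply_of_mem hx, sub_self]
    · have hx' : x1 ∉ (g n).1 := fun hc => hx ((hmem n).mpr hc)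
      rw [Measure.dirac_apply' _ (g n).2, Measure.dirac_apply' _ (g n).2,
        Set.indicator_of_notMem hx', Set.indicator_of_notMem hx, sub_self]
  refine ⟨μr, ⟨(fun x : S => x r) ⁻¹' {false}, (measurable_pi_apply r) (measurableSet_singleton _), ?_⟩, ?_⟩
  · -- μr of the set {x | x r = false} is -1
    have hB : MeasurableSet ((fun x : S => x r) ⁻¹' {false}) :=
      (measurable_pi_apply r) (measurableSet_singleton _)
    rw [hval _ hB]
    have hx1mem : x1 ∉ (fun x : S => x r) ⁻¹' {false} := by
      simp [hx1, Function.update_self]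
    have hx0mem : x0 ∈ (fun x : S => x r) ⁻¹' {false} := by simp [hx0]
    rw [Measure.dirac_apply' _ hB, Measure.dirac_apply' _ hB,
      Set.indicator_of_notMem hx1mem, Set.indicator_of_mem hx0mem]
    simp
  · -- μr ∈ T ↔ 0 ∈ T
    refine mem_iff_of_eval_eq (fun n (μ : SignedMeasure S) => μ (g n).1) hg fun n => ?_
    show μr ((g n).1) = (0 : SignedMeasure S) ((g n).1)
    rw [hzero n, VectorMeasure.zero_apply]

end Key

/-- on the space `S = {0,1}^ℝ` with the product σ-algebra generated
by the coordinate projections, the map `μ ↦ |μ|(S)` from the space `M±(S)` of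
finite signed measures (with the σ-algebra generated by the evaluation maps) to
`[0,∞)` is not measurable; moreover the set `M(S)` of nonnegative finite measures
is not a measurable subset of `M±(S)`. -/
theorem totalVariation_not_measurable_counterexample :
    ¬ Measurable (fun μ : SignedMeasure (ℝ → Bool) =>
        (μ.totalVariation Set.univ).toReal) ∧
    ¬ MeasurableSet {μ : SignedMeasure (ℝ → Bool) | 0 ≤ μ} := by
  constructor
  · intro hf
    obtain ⟨μ, ⟨B, hB, hμB⟩, hiff⟩ :=
      key_lemma ((fun μ : SignedMeasure (ℝ → Bool) =>
        (μ.totalVariation Set.univ).toReal) ⁻¹' {0}) (hf (measurableSet_singleton 0))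
    have h0 : (0 : SignedMeasure (ℝ → Bool)) ∈ (fun μ : SignedMeasure (ℝ → Bool) =>
        (μ.totalVariation Set.univ).toReal) ⁻¹' {0} := by
      simp [SignedMeasure.totalVariation_zero]
    have hμmem := hiff.mpr h0
    have hμ0 : (μ.totalVariation Set.univ).toReal = 0 := hμmem
    have hfin : μ.totalVariation Set.univ ≠ ⊤ := by
      haveI : IsFiniteMeasure μ.totalVariation := by
        rw [SignedMeasure.totalVariation]; infer_instance
      exact measure_ne_top _ _
    have htv : μ.totalVariation Set.univ = 0 := by
      rcases (ENNReal.toReal_eq_zero_iff _).mp hμ0 with h | h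
      · exact h
      · exact absurd h hfin
    have hBzero : μ B = 0 := by
      refine SignedMeasure.null_of_totalVariation_zero μ ?_
      exact le_antisymm (htv ▸ measure_mono (Set.subset_univ B)) zero_le
    rw [hμB] at hBzero
    norm_num at hBzero
  · intro hmeas
    obtain ⟨μ, ⟨B, hB, hμB⟩, hiff⟩ := key_lemma _ hmeas
    have h0 : (0 : SignedMeasure (ℝ → Bool)) ∈ {μ : SignedMeasure (ℝ → Bool) | 0 ≤ μ} :=
      Set.mem_setOf_eq ▸ le_refl (0 : SignedMeasure (ℝ → Bool))
    have hμmem : 0 ≤ μ := hiff.mpr h0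
    have := (VectorMeasure.le_iff.mp hμmem) B hB
    rw [VectorMeasure.zero_apply, hμB] at this
    norm_num at this
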